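/- Let H be a graph with χ(H) = k, where k ≥ 2. Let G be formed from k vertex-disjoint copies H¹,…,Hᵏ of H by adding, for every k-tuple (v¹,…,vᵏ) ∈ V(H¹)×⋯×V(Hᵏ), a new vertex w(v¹,…,vᵏ) adjacent exactly to v¹,…,vᵏ. Then χ(G) = k + 1. -/
import Mathlib

/-- The construction adding, for each `k`-tuple of vertices across `k` disjoint
copies of `H`, a new vertex adjacent exactly to the vertices of the tuple. -/
def tupleExtension {V : Type*} (H : SimpleGraph V) (k : ℕ) :
    SimpleGraph ((Fin k × V) ⊕ (Fin k → V)) :=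
  SimpleGraph.fromRel fun a b =>
    match a, b with
    | Sum.inl (i, u), Sum.inl (j, v) => i = j ∧ H.Adj u v
    | Sum.inl (i, u), Sum.inr f => f i = u
    | Sum.inr f, Sum.inl (i, u) => f i = u
    | Sum.inr _, Sum.inr _ => False

theorem stmt_3 {V : Type*} (H : SimpleGraph V) (k : ℕ) (hk : 2 ≤ k)
    (hχ : H.chromaticNumber = k) :
    (tupleExtension H k).chromaticNumber = (k : ℕ∞) + 1 := by
  have hHk : H.Colorable k := by
    rw [← SimpleGraph.chromaticNumber_le_iff_colorable, hχ]
  obtain ⟨C⟩ := hHk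
  -- Upper bound
  have hub : (tupleExtension H k).Colorable (k + 1) := by
    refine ⟨SimpleGraph.Coloring.mk
      (fun a => match a with
        | Sum.inl (_, u) => (C u).castSucc
        | Sum.inr _ => Fin.last k) ?_⟩
    rintro (⟨i, u⟩ | f) (⟨j, v⟩ | g) hadj
    · obtain ⟨hne, h | h⟩ := hadj <;>
      · simp only [Fin.castSucc_inj, ne_eq]
        intro hC
        exact C.valid h.2 (by simp [hC]) |>.elim
    · simp [Fin.ext_iff, (C u).is_lt.ne]
    · simp [Fin.ext_iff, (C v).is_lt.ne']
    · exact absurd hadj.2 (by simp)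
  -- Lower bound: not colorable with k colors
  have hlb : ¬ (tupleExtension H k).Colorable k := by
    rintro ⟨D⟩
    -- restriction to each copy is surjective
    have hsurj : ∀ i : Fin k, Function.Surjective (fun u : V => D (Sum.inl (i, u))) := by
      intro i
      by_contra hn
      simp only [Function.Surjective, not_forall] at hn
      obtain ⟨c, hc⟩ := hn
      push_neg at hc
      -- H colorable with k-1 colors
      have : H.Colorable (k - 1) := by
        have hcard : Fintype.card {x : Fin k // x ≠ c} = k - 1 := by
          simp [Fintype.card_subtype_compl]
        have Ccol : H.Coloring {x : Fin k // x ≠ c} := by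
          refine SimpleGraph.Coloring.mk (fun u => ⟨D (Sum.inl (i, u)), hc u⟩) ?_
          intro u v huv
          simp only [ne_eq, Subtype.mk.injEq]
          exact D.valid (by
            refine ⟨by simp [huv.ne], Or.inl ⟨rfl, huv⟩⟩)
        exact hcard ▸ Ccol.colorable
      have := this.chromaticNumber_le
      rw [hχ] at this
      have : (k : ℕ∞) ≤ (k - 1 : ℕ) := this
      rw [Nat.cast_le] at this
      omega
    choose f hf using fun i => hsurj i i
    have hadj : ∀ i : Fin k, (tupleExtension H k).Adj (Sum.inr f) (Sum.inl (i, f i)) := by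
      intro i
      exact ⟨by simp, Or.inl rfl⟩
    have := D.valid (hadj (D (Sum.inr f)))
    exact this ((hf (D (Sum.inr f))).symm)
  -- combine
  refine le_antisymm ?_ ?_
  · have := hub.chromaticNumber_le
    calc (tupleExtension H k).chromaticNumber ≤ ((k + 1 : ℕ) : ℕ∞) := this
    _ = (k : ℕ∞) + 1 := by push_cast; ring
  · rw [← SimpleGraph.chromaticNumber_le_iff_colorable] at hlb
    have hlt : (k : ℕ∞) < (tupleExtension H k).chromaticNumber := lt_of_not_ge hlb
    exact Order.add_one_le_of_lt hlt
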